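/- (Uniqueness of the NDMPI) Let A be an m×n dual complex matrix. If X and Y are both NDMPIs of A, i.e., both satisfy A*·A·X·A·A* = A*·A·A*, X·A·X = X, (A·X)* = A·X, (X·A)* = X·A, and the same four equations with Y in place of X, then X = Y. -/

import Mathlib

open Matrix

/-- The dual complex numbers ℂ[ε] with ε² = 0 (dual numbers over ℂ). -/
abbrev DualComplex := DualNumber ℂ

/-- Conjugation on dual complex numbers: star (a + b·ε) = (conj a) + (conj b)·ε. -/
noncomputable instance : StarRing DualComplex where
  star x := ⟨star x.fst, star x.snd⟩
  star_involutive x := TrivSqZeroExt.ext (star_star x.fst) (star_star x.snd)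
  star_mul x y := TrivSqZeroExt.ext
    (by simp [TrivSqZeroExt.fst_mul, mul_comm]; erw [TrivSqZeroExt.fst_mul]; exact mul_comm _ _)
    (by simp [TrivSqZeroExt.snd_mul]; erw [TrivSqZeroExt.snd_mul]; simp only [smul_eq_mul, MulOpposite.smul_eq_mul_unop, MulOpposite.unop_op]; rw [add_comm]; exact congrArg₂ (· + ·) (mul_comm _ _) (mul_comm _ _))
  star_add x y := TrivSqZeroExt.ext (by simp; rfl) (by simp; rfl)

/-- `X` is a new dual Moore–Penrose inverse (NDMPI) of `M`:
`M*·M·X·M·M* = M*·M·M*`, `X·M·X = X`, `(M·X)* = M·X`, `(X·M)* = X·M`. -/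
def IsNDMPI {m n : ℕ} (M : Matrix (Fin m) (Fin n) DualComplex)
    (X : Matrix (Fin n) (Fin m) DualComplex) : Prop :=
  Mᴴ * M * X * M * Mᴴ = Mᴴ * M * Mᴴ ∧
  X * M * X = X ∧
  (M * X)ᴴ = M * X ∧
  (X * M)ᴴ = X * M

namespace NDMPIAux

open scoped ComplexOrder

/-- Primal part of a dual complex matrix. -/
def pF {m n : ℕ} (M : Matrix (Fin m) (Fin n) DualComplex) : Matrix (Fin m) (Fin n) ℂ :=
  Matrix.of fun i j => (M i j).fst

/-- Dual part of a dual complex matrix. -/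
def pS {m n : ℕ} (M : Matrix (Fin m) (Fin n) DualComplex) : Matrix (Fin m) (Fin n) ℂ :=
  Matrix.of fun i j => (M i j).snd

lemma ext_of {m n : ℕ} {M N : Matrix (Fin m) (Fin n) DualComplex}
    (h1 : pF M = pF N) (h2 : pS M = pS N) : M = N :=
  Matrix.ext fun i j => TrivSqZeroExt.ext
    (congrFun (congrFun h1 i) j) (congrFun (congrFun h2 i) j)

lemma pF_mul {m n k : ℕ} (M : Matrix (Fin m) (Fin n) DualComplex)
    (N : Matrix (Fin n) (Fin k) DualComplex) : pF (M * N) = pF M * pF N := by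
  ext i j
  simp [pF, Matrix.mul_apply, TrivSqZeroExt.fst_sum]

lemma pS_mul {m n k : ℕ} (M : Matrix (Fin m) (Fin n) DualComplex)
    (N : Matrix (Fin n) (Fin k) DualComplex) :
    pS (M * N) = pF M * pS N + pS M * pF N := by
  ext i j
  simp [pS, pF, Matrix.mul_apply, TrivSqZeroExt.snd_sum, TrivSqZeroExt.snd_mul,
    Finset.sum_add_distrib, mul_comm]

lemma pF_conjTranspose {m n : ℕ} (M : Matrix (Fin m) (Fin n) DualComplex) :
    pF Mᴴ = (pF M)ᴴ := rfl

lemma pS_conjTranspose {m n : ℕ} (M : Matrix (Fin m) (Fin n) DualComplex) :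
    pS Mᴴ = (pS M)ᴴ := rfl

lemma pF_sub {m n : ℕ} (M N : Matrix (Fin m) (Fin n) DualComplex) :
    pF (M - N) = pF M - pF N := rfl

lemma pS_sub {m n : ℕ} (M N : Matrix (Fin m) (Fin n) DualComplex) :
    pS (M - N) = pS M - pS N := rfl

/-- Left cancellation: `Aᴴ A B = Aᴴ A C → A B = A C` over ℂ. -/
lemma cancel_left {m n k : ℕ} (A : Matrix (Fin m) (Fin n) ℂ)
    (B C : Matrix (Fin n) (Fin k) ℂ)
    (h : Aᴴ * A * B = Aᴴ * A * C) : A * B = A * C := by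
  have hU : A * (B - C) = 0 := by
    have h2 : (A * (B - C))ᴴ * (A * (B - C)) = 0 := by
      have : Aᴴ * (A * (B - C)) = 0 := by
        rw [Matrix.mul_sub, Matrix.mul_sub, ← Matrix.mul_assoc, ← Matrix.mul_assoc, h, sub_self]
      calc (A * (B - C))ᴴ * (A * (B - C))
          = (B - C)ᴴ * (Aᴴ * (A * (B - C))) := by
            rw [conjTranspose_mul, Matrix.mul_assoc]
        _ = 0 := by rw [this, Matrix.mul_zero]
    exact Matrix.conjTranspose_mul_self_eq_zero.mp h2
  rw [Matrix.mul_sub] at hU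
  exact sub_eq_zero.mp hU

/-- Right cancellation: `B A Aᴴ = C A Aᴴ → B A = C A` over ℂ. -/
lemma cancel_right {m n k : ℕ} (A : Matrix (Fin m) (Fin n) ℂ)
    (B C : Matrix (Fin k) (Fin m) ℂ)
    (h : B * (A * Aᴴ) = C * (A * Aᴴ)) : B * A = C * A := by
  have hU : (B - C) * A = 0 := by
    have h2 : ((B - C) * A) * ((B - C) * A)ᴴ = 0 := by
      have : ((B - C) * A) * Aᴴ = 0 := by
        rw [Matrix.sub_mul, Matrix.sub_mul, Matrix.mul_assoc, Matrix.mul_assoc, h, sub_self]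
      calc ((B - C) * A) * ((B - C) * A)ᴴ
          = (((B - C) * A) * Aᴴ) * (B - C)ᴴ := by
            rw [conjTranspose_mul]; simp only [Matrix.mul_assoc]
        _ = 0 := by rw [this, Matrix.zero_mul]
    exact Matrix.self_mul_conjTranspose_eq_zero.mp h2
  rw [Matrix.sub_mul] at hU
  exact sub_eq_zero.mp hU

/-- Classical Moore–Penrose uniqueness over ℂ. -/
lemma mp_unique {m n : ℕ} (A : Matrix (Fin m) (Fin n) ℂ)
    (X Y : Matrix (Fin n) (Fin m) ℂ)
    (hX1 : A * X * A = A) (hX2 : X * A * X = X)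
    (hX3 : (A * X)ᴴ = A * X) (hX4 : (X * A)ᴴ = X * A)
    (hY1 : A * Y * A = A) (hY2 : Y * A * Y = Y)
    (hY3 : (A * Y)ᴴ = A * Y) (hY4 : (Y * A)ᴴ = Y * A) :
    X = Y := by
  have hAXY : A * X = A * Y := by
    calc A * X = (A * X)ᴴ := hX3.symm
      _ = Xᴴ * Aᴴ := conjTranspose_mul _ _
      _ = Xᴴ * (A * Y * A)ᴴ := by rw [hY1]
      _ = Xᴴ * (Aᴴ * (A * Y)ᴴ) := by rw [conjTranspose_mul (A * Y) A]
      _ = Xᴴ * (Aᴴ * (A * Y)) := by rw [hY3]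
      _ = (Xᴴ * Aᴴ) * (A * Y) := by simp only [Matrix.mul_assoc]
      _ = (A * X)ᴴ * (A * Y) := by rw [conjTranspose_mul]
      _ = (A * X) * (A * Y) := by rw [hX3]
      _ = (A * X * A) * Y := by simp only [Matrix.mul_assoc]
      _ = A * Y := by rw [hX1]
  have hXYA : X * A = Y * A := by
    calc X * A = (X * A)ᴴ := hX4.symm
      _ = Aᴴ * Xᴴ := conjTranspose_mul _ _
      _ = (A * (Y * A))ᴴ * Xᴴ := by rw [← Matrix.mul_assoc, hY1]
      _ = ((Y * A)ᴴ * Aᴴ) * Xᴴ := by rw [conjTranspose_mul A]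
      _ = ((Y * A) * Aᴴ) * Xᴴ := by rw [hY4]
      _ = (Y * A) * (X * A)ᴴ := by rw [conjTranspose_mul X A, Matrix.mul_assoc]
      _ = (Y * A) * (X * A) := by rw [hX4]
      _ = Y * (A * X * A) := by simp only [Matrix.mul_assoc]
      _ = Y * A := by rw [hX1]
  calc X = X * A * X := hX2.symm
    _ = Y * A * X := by rw [hXYA]
    _ = Y * (A * X) := Matrix.mul_assoc _ _ _
    _ = Y * (A * Y) := by rw [hAXY]
    _ = Y * A * Y := (Matrix.mul_assoc _ _ _).symm
    _ = Y := hY2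

lemma pS_mul_left {m n k : ℕ} (M : Matrix (Fin m) (Fin n) DualComplex)
    {N : Matrix (Fin n) (Fin k) DualComplex} (hN : pF N = 0) :
    pS (M * N) = pF M * pS N := by
  rw [pS_mul, hN, Matrix.mul_zero, add_zero]

lemma pS_mul_right {m n k : ℕ} (M : Matrix (Fin n) (Fin k) DualComplex)
    {N : Matrix (Fin m) (Fin n) DualComplex} (hN : pF N = 0) :
    pS (N * M) = pS N * pF M := by
  rw [pS_mul, hN, Matrix.zero_mul, zero_add]

lemma pF_mul_left {m n k : ℕ} (M : Matrix (Fin m) (Fin n) DualComplex)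
    {N : Matrix (Fin n) (Fin k) DualComplex} (hN : pF N = 0) :
    pF (M * N) = 0 := by rw [pF_mul, hN, Matrix.mul_zero]

lemma pF_mul_right {m n k : ℕ} (M : Matrix (Fin n) (Fin k) DualComplex)
    {N : Matrix (Fin m) (Fin n) DualComplex} (hN : pF N = 0) :
    pF (N * M) = 0 := by rw [pF_mul, hN, Matrix.zero_mul]

/-- Uniqueness of the dual part. -/
lemma dual_part_zero {m n : ℕ} (A : Matrix (Fin m) (Fin n) ℂ)
    (G D : Matrix (Fin n) (Fin m) ℂ)
    (hG3 : (A * G)ᴴ = A * G) (hG4 : (G * A)ᴴ = G * A)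
    (h1 : A * D * A = 0)
    (h2 : G * A * D + D * (A * G) = D)
    (h3 : (A * D)ᴴ = A * D) (h4 : (D * A)ᴴ = D * A) : D = 0 := by
  have hAD : A * D = 0 := by
    have e1 : A * D = (A * G) * (A * D) := by
      calc A * D = A * (G * A * D + D * (A * G)) := by rw [h2]
        _ = (A * G) * (A * D) + (A * D * A) * G := by
            rw [Matrix.mul_add]; simp only [Matrix.mul_assoc]
        _ = (A * G) * (A * D) := by rw [h1, Matrix.zero_mul, add_zero]
    calc A * D = (A * D)ᴴ := h3.symm
      _ = ((A * G) * (A * D))ᴴ := by rw [← e1]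
      _ = (A * D)ᴴ * (A * G)ᴴ := conjTranspose_mul _ _
      _ = (A * D) * (A * G) := by rw [h3, hG3]
      _ = (A * D * A) * G := by simp only [Matrix.mul_assoc]
      _ = 0 := by rw [h1, Matrix.zero_mul]
  have hDA : D * A = 0 := by
    have e1 : D * A = (D * A) * (G * A) := by
      calc D * A = (G * A * D + D * (A * G)) * A := by rw [h2]
        _ = G * (A * D * A) + (D * A) * (G * A) := by
            rw [Matrix.add_mul]; simp only [Matrix.mul_assoc]
        _ = (D * A) * (G * A) := by rw [h1, Matrix.mul_zero, zero_add]
    calc D * A = (D * A)ᴴ := h4.symm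
      _ = ((D * A) * (G * A))ᴴ := by rw [← e1]
      _ = (G * A)ᴴ * (D * A)ᴴ := conjTranspose_mul _ _
      _ = (G * A) * (D * A) := by rw [h4, hG4]
      _ = G * (A * D * A) := by simp only [Matrix.mul_assoc]
      _ = 0 := by rw [h1, Matrix.mul_zero]
  calc D = G * A * D + D * (A * G) := h2.symm
    _ = G * (A * D) + D * (A * G) := by simp only [Matrix.mul_assoc]
    _ = 0 := by
        rw [hAD, ← Matrix.mul_assoc D A G, hDA, Matrix.mul_zero, Matrix.zero_mul, add_zero]

end NDMPIAux

open NDMPIAux in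
/-- Uniqueness of the NDMPI: if `X` and `Y` are both NDMPIs of `A`, then `X = Y`. -/
theorem stmt_18 {m n : ℕ} (A : Matrix (Fin m) (Fin n) DualComplex)
    (X Y : Matrix (Fin n) (Fin m) DualComplex)
    (hX : IsNDMPI A X) (hY : IsNDMPI A Y) : X = Y := by
  obtain ⟨hX1, hX2, hX3, hX4⟩ := hX
  obtain ⟨hY1, hY2, hY3, hY4⟩ := hY
  set A0 := pF A with hA0
  set X0 := pF X with hX0
  set Y0 := pF Y with hY0
  -- primal parts of the four conditions
  have pX1 : A0ᴴ * A0 * X0 * A0 * A0ᴴ = A0ᴴ * A0 * A0ᴴ := by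
    have := congrArg pF hX1; simpa only [pF_mul, pF_conjTranspose] using this
  have pX2 : X0 * A0 * X0 = X0 := by
    have := congrArg pF hX2; simpa only [pF_mul] using this
  have pX3 : (A0 * X0)ᴴ = A0 * X0 := by
    have := congrArg pF hX3; simpa only [pF_mul, pF_conjTranspose] using this
  have pX4 : (X0 * A0)ᴴ = X0 * A0 := by
    have := congrArg pF hX4; simpa only [pF_mul, pF_conjTranspose] using this
  have pY1 : A0ᴴ * A0 * Y0 * A0 * A0ᴴ = A0ᴴ * A0 * A0ᴴ := by
    have := congrArg pF hY1; simpa only [pF_mul, pF_conjTranspose] using this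
  have pY2 : Y0 * A0 * Y0 = Y0 := by
    have := congrArg pF hY2; simpa only [pF_mul] using this
  have pY3 : (A0 * Y0)ᴴ = A0 * Y0 := by
    have := congrArg pF hY3; simpa only [pF_mul, pF_conjTranspose] using this
  have pY4 : (Y0 * A0)ᴴ = Y0 * A0 := by
    have := congrArg pF hY4; simpa only [pF_mul, pF_conjTranspose] using this
  -- derive the classical MP condition A0 X0 A0 = A0 and A0 Y0 A0 = A0
  have mp1 : ∀ Z : Matrix (Fin n) (Fin m) ℂ,
      A0ᴴ * A0 * Z * A0 * A0ᴴ = A0ᴴ * A0 * A0ᴴ → A0 * Z * A0 = A0 := by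
    intro Z hZ
    have s1 : A0 * (Z * (A0 * A0ᴴ)) = A0 * A0ᴴ := by
      have := cancel_left A0 (Z * (A0 * A0ᴴ)) A0ᴴ (by
        simpa only [Matrix.mul_assoc] using hZ)
      exact this
    have s2 : (A0 * Z) * (A0 * A0ᴴ) = (1 : Matrix (Fin m) (Fin m) ℂ) * (A0 * A0ᴴ) := by
      rw [Matrix.one_mul]; simpa only [Matrix.mul_assoc] using s1
    have := cancel_right A0 (A0 * Z) 1 s2
    rwa [Matrix.one_mul] at this
  have mpX : A0 * X0 * A0 = A0 := mp1 X0 pX1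
  have mpY : A0 * Y0 * A0 = A0 := mp1 Y0 pY1
  -- primal parts coincide
  have hF : X0 = Y0 := mp_unique A0 X0 Y0 mpX pX2 pX3 pX4 mpY pY2 pY3 pY4
  -- dual parts
  set D : Matrix (Fin n) (Fin m) ℂ := pS X - pS Y with hD
  have hΔF : pF (X - Y) = 0 := by rw [pF_sub, ← hX0, ← hY0, hF, sub_self]
  have hΔS : pS (X - Y) = D := by rw [pS_sub]
  -- condition 1 difference
  have c1 : Aᴴ * A * (X - Y) * A * Aᴴ = 0 := by
    calc Aᴴ * A * (X - Y) * A * Aᴴ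
        = Aᴴ * A * X * A * Aᴴ - Aᴴ * A * Y * A * Aᴴ := by
          rw [Matrix.mul_sub, Matrix.sub_mul, Matrix.sub_mul]
      _ = 0 := by rw [hX1, hY1, sub_self]
  have d1 : A0ᴴ * A0 * D * A0 * A0ᴴ = 0 := by
    have e0 : pF (Aᴴ * A * (X - Y)) = 0 := pF_mul_left _ hΔF
    have e1 : pS (Aᴴ * A * (X - Y)) = A0ᴴ * A0 * D := by
      rw [pS_mul_left _ hΔF, pF_mul, pF_conjTranspose, hΔS]
    have e2 : pF (Aᴴ * A * (X - Y) * A) = 0 := pF_mul_right _ e0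
    have e3 : pS (Aᴴ * A * (X - Y) * A) = A0ᴴ * A0 * D * A0 := by
      rw [pS_mul_right _ e0, e1]
    have e4 : pS (Aᴴ * A * (X - Y) * A * Aᴴ) = A0ᴴ * A0 * D * A0 * A0ᴴ := by
      rw [pS_mul_right _ e2, e3, pF_conjTranspose]
    rw [← e4, c1]
    rfl
  have dADA : A0 * D * A0 = 0 := by
    have s1 : A0 * (D * (A0 * A0ᴴ)) = A0 * (0 : Matrix (Fin n) (Fin m) ℂ) := by
      apply cancel_left
      rw [Matrix.mul_zero]
      simpa only [Matrix.mul_assoc] using d1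
    rw [Matrix.mul_zero] at s1
    have s2 : (A0 * D) * (A0 * A0ᴴ) = (0 : Matrix (Fin m) (Fin m) ℂ) * (A0 * A0ᴴ) := by
      rw [Matrix.zero_mul]
      simpa only [Matrix.mul_assoc] using s1
    have h := cancel_right A0 (A0 * D) 0 s2
    rwa [Matrix.zero_mul] at h
  -- condition 2 difference
  have c2 : X * A * (X - Y) + (X - Y) * (A * Y) = X - Y := by
    have : X * A * (X - Y) + (X - Y) * (A * Y) = X * A * X - Y * A * Y := by
      rw [Matrix.mul_sub, Matrix.sub_mul]
      simp only [Matrix.mul_assoc]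
      abel
    rw [this, hX2, hY2]
  have d2 : X0 * A0 * D + D * (A0 * X0) = D := by
    have e1 : pS (X * A * (X - Y)) = X0 * A0 * D := by
      rw [pS_mul_left _ hΔF, pF_mul, hΔS]
    have e2 : pS ((X - Y) * (A * Y)) = D * (A0 * X0) := by
      rw [pS_mul_right _ hΔF, hΔS, pF_mul, ← hY0, ← hF]
    have := congrArg pS c2
    rw [show pS (X * A * (X - Y) + (X - Y) * (A * Y))
        = pS (X * A * (X - Y)) + pS ((X - Y) * (A * Y)) from rfl, e1, e2, hΔS] at this
    exact this
  -- conditions 3, 4 differences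
  have c3 : (A * (X - Y))ᴴ = A * (X - Y) := by
    rw [Matrix.mul_sub, conjTranspose_sub, hX3, hY3]
  have d3 : (A0 * D)ᴴ = A0 * D := by
    have e1 : pS (A * (X - Y)) = A0 * D := by rw [pS_mul_left _ hΔF, hΔS]
    have := congrArg pS c3
    rwa [pS_conjTranspose, e1] at this
  have c4 : ((X - Y) * A)ᴴ = (X - Y) * A := by
    rw [Matrix.sub_mul, conjTranspose_sub, hX4, hY4]
  have d4 : (D * A0)ᴴ = D * A0 := by
    have e1 : pS ((X - Y) * A) = D * A0 := by rw [pS_mul_right _ hΔF, hΔS]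
    have := congrArg pS c4
    rwa [pS_conjTranspose, e1] at this
  -- conclude D = 0
  have hDzero : D = 0 := dual_part_zero A0 X0 D pX3 pX4 dADA d2 d3 d4
  have hS : pS X = pS Y := by
    have := sub_eq_zero.mp hDzero
    exact this
  exact ext_of (hF.trans rfl) hS
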